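/- Define K_{Sp(2n)}(x,y) := s_{2n+1}(x−y) − s_{2n−1}(x+y), where s_m(t) := sin(πmt)/sin(πt) (extended by continuity, with s_m(0) = m). There is an absolute constant C > 0 such that for every integer n ≥ 1 and every interval I ⊆ [0, 1/2]: (i) | ∫_I K_{Sp(2n)}(x,x) dx − 2n·|I| | ≤ C, and (ii) ∫_{[0,1/2]∖I} ∫_I K_{Sp(2n)}(x,y)² dx dy ≤ C·log(2 + 2n·|I|). -/

import Mathlib

open Real MeasureTheory

/-- `sKer m t = sin (π m t) / sin (π t)`, extended by continuity where `sin (π t) = 0`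
(at an integer `t = k` the continuous extension has value `m·cos(πmk)/cos(πk)`, which equals
`m·cos(πmt)·cos(πt)` there; in particular `sKer m 0 = m`). -/
noncomputable def sKer (m : ℕ) (t : ℝ) : ℝ :=
  if Real.sin (π * t) = 0 then (m : ℝ) * Real.cos (π * m * t) * Real.cos (π * t)
  else Real.sin (π * m * t) / Real.sin (π * t)

/-- The determinantal kernel of the nontrivial eigenangles of a Haar-random matrix in the
compact symplectic group `Sp(2n)`: `K_{Sp(2n)}(x,y) = s_{2n+1}(x−y) − s_{2n−1}(x+y)`. -/
noncomputable def KSp (n : ℕ) (x y : ℝ) : ℝ :=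
  sKer (2 * n + 1) (x - y) - sKer (2 * n - 1) (x + y)

noncomputable def gB (m t : ℝ) : ℝ := 2*m^2/(1+(2*m*t)^2)

noncomputable def Bf (v : ℝ) : ℝ := v * Real.arctan v - Real.log (1+v^2)/2


lemma dirichlet_sin (u : ℝ) (N : ℕ) :
    Real.sin ((2*N+1)*u) = Real.sin u * (1 + 2*∑ k ∈ Finset.range N, Real.cos (2*(k+1)*u)) := by
  induction N with
  | zero => simp
  | succ N ih =>
    have h := Real.sin_sub_sin ((2*(N+1)+1)*u) ((2*N+1)*u)
    have h1 : ((2*(N+1)+1)*u - (2*N+1)*u)/2 = u := by push_cast; ring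
    have h2 : ((2*(N+1)+1)*u + (2*N+1)*u)/2 = 2*(N+1)*u := by push_cast; ring
    rw [h1, h2] at h
    rw [Finset.sum_range_succ]
    push_cast at *
    linear_combination h + ih
lemma sKer_odd_eq (N : ℕ) (x : ℝ) :
    sKer (2*N+1) (2*x) = 1 + 2*∑ k ∈ Finset.range N, Real.cos (4*π*(k+1)*x) := by
  by_cases h : Real.sin (π * (2*x)) = 0
  · obtain ⟨j, hj⟩ := Real.sin_eq_zero_iff.mp h
    have hx : π * (2*x) = π * (j:ℝ) := by linarith
    have hx' : 2*x = (j:ℝ) := mul_left_cancel₀ Real.pi_ne_zero hx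
    rw [sKer, if_pos h]
    push_cast
    have hs : ∀ k ∈ Finset.range N, Real.cos (4*π*(k+1)*x) = 1 := by
      intro k _
      have harg : 4*π*((k:ℝ)+1)*x = ((k+1)*j : ℤ) * (2*π) := by
        push_cast; linear_combination (2*π*((k:ℝ)+1)) * hx'
      rw [harg, Real.cos_int_mul_two_pi]
    rw [Finset.sum_congr rfl hs]
    simp only [Finset.sum_const, Finset.card_range, nsmul_eq_mul, mul_one]
    have hc1 : Real.cos (π * (2*(N:ℝ)+1) * (2*x)) = Real.cos ((j:ℝ)*π) := by
      have harg : π * (2*(N:ℝ)+1)*(2*x) = (j:ℝ)*π + ((N*j:ℤ))*(2*π) := by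
        push_cast; linear_combination (π*(2*(N:ℝ)+1))*hx'
      rw [harg, Real.cos_add_int_mul_two_pi]
    have hc2 : Real.cos (π * (2*x)) = Real.cos ((j:ℝ)*π) := by rw [hx, mul_comm]
    rw [hc1, hc2]
    have hs0 : Real.sin ((j:ℝ)*π) = 0 := Real.sin_int_mul_pi j
    have hcsq : Real.cos ((j:ℝ)*π)^2 = 1 := by
      have := Real.sin_sq_add_cos_sq ((j:ℝ)*π)
      nlinarith [hs0]
    linear_combination (2*(N:ℝ)+1) * hcsq
  · rw [sKer, if_neg h]
    have hd := dirichlet_sin (2*π*x) N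
    have e1 : π * ((2*N+1:ℕ):ℝ) * (2*x) = (2*(N:ℝ)+1)*(2*π*x) := by push_cast; ring
    have e2 : π * (2*x) = 2*π*x := by ring
    have hcos : ∀ k ∈ Finset.range N, Real.cos (4*π*(k+1)*x) = Real.cos (2*(k+1)*(2*π*x)) := by
      intro k _; ring_nf
    rw [e1, e2, Finset.sum_congr rfl hcos, hd]
    have hu : Real.sin (2*π*x) ≠ 0 := by rwa [e2] at h
    field_simp


lemma dirichlet_partial (θ : ℝ) (hs : Real.sin (θ/2) ≠ 0) (K : ℕ) :
    |∑ k ∈ Finset.range K, Real.sin ((k+1)*θ)| ≤ 1/|Real.sin (θ/2)| := by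
  have key : ∀ K : ℕ, 2*Real.sin (θ/2) * ∑ k ∈ Finset.range K, Real.sin ((k+1)*θ)
      = Real.cos (θ/2) - Real.cos ((K + 1/2)*θ) := by
    intro K
    induction K with
    | zero => simp [show (2⁻¹:ℝ)*θ = θ/2 by ring]
    | succ K ih =>
      rw [Finset.sum_range_succ]
      have h := Real.cos_sub_cos (((K:ℝ) + 1/2)*θ) (((K:ℝ)+1 + 1/2)*θ)
      have e1 : ((((K:ℝ) + 1/2)*θ + ((K:ℝ)+1+1/2)*θ))/2 = ((K:ℝ)+1)*θ := by ring
      have e2 : ((((K:ℝ) + 1/2)*θ - ((K:ℝ)+1+1/2)*θ))/2 = -(θ/2) := by ring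
      rw [e1, e2, Real.sin_neg] at h
      push_cast at ih ⊢
      linear_combination ih - h
  have h2 : |2*Real.sin (θ/2) * ∑ k ∈ Finset.range K, Real.sin ((k+1)*θ)| ≤ 2 := by
    rw [key K]
    have := Real.neg_one_le_cos (θ/2)
    have := Real.cos_le_one (θ/2)
    have := Real.neg_one_le_cos (((K:ℝ) + 1/2)*θ)
    have := Real.cos_le_one (((K:ℝ) + 1/2)*θ)
    rw [abs_le]; constructor <;> linarith
  have habs : |Real.sin (θ/2)| > 0 := abs_pos.mpr hs
  rw [abs_mul, abs_mul, abs_two] at h2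
  rw [le_div_iff₀ habs]
  nlinarith [abs_nonneg (∑ k ∈ Finset.range K, Real.sin ((k+1)*θ))]

lemma abel_bound (a : ℕ → ℝ) (B : ℝ) (hB : ∀ K : ℕ, |∑ k ∈ Finset.range K, a k| ≤ B)
    (M N : ℕ) (hMN : M ≤ N) :
    |∑ k ∈ Finset.Ico M N, a k/(k+1)| ≤ 2*B/(M+1) := by
  set S : ℕ → ℝ := fun K => ∑ k ∈ Finset.range K, a k with hS
  have key : ∀ N, M ≤ N → |(∑ k ∈ Finset.Ico M N, a k/(k+1)) + S M/(M+1) - S N/(N+1)|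
      ≤ B*(1/(M+1) - 1/(N+1)) := by
    intro N
    induction N with
    | zero =>
      intro h0
      interval_cases M
      simp
    | succ N ih =>
      intro hMN'
      rcases Nat.lt_or_ge M (N+1) with hlt | hge
      · have hMN'' : M ≤ N := Nat.lt_succ_iff.mp hlt
        have ihh := ih hMN''
        rw [Finset.sum_Ico_succ_top hMN'']
        have haN : a N = S (N+1) - S N := by rw [hS]; simp [Finset.sum_range_succ]
        have hBn := hB (N+1)
        have hpos1 : (0:ℝ) < (N:ℝ)+1 := by positivity
        have hpos2 : (0:ℝ) < (N:ℝ)+1+1 := by positivity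
        have e : (∑ k ∈ Finset.Ico M N, a k/(k+1)) + a N/(N+1) + S M/(M+1) - S (N+1)/(N+1+1)
            = ((∑ k ∈ Finset.Ico M N, a k/(k+1)) + S M/(M+1) - S N/(N+1))
              + S (N+1) * (1/((N:ℝ)+1) - 1/((N:ℝ)+1+1)) := by
          rw [haN]; field_simp; ring
        push_cast
        push_cast at e ihh
        rw [e]
        have hstep : |S (N+1) * (1/((N:ℝ)+1) - 1/((N:ℝ)+1+1))| ≤ B * (1/((N:ℝ)+1) - 1/((N:ℝ)+1+1)) := by
          rw [abs_mul]
          have h1 : (0:ℝ) ≤ 1/((N:ℝ)+1) - 1/((N:ℝ)+1+1) := by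
            rw [sub_nonneg, div_le_div_iff₀ hpos2 hpos1]; linarith
          rw [abs_of_nonneg h1]
          exact mul_le_mul_of_nonneg_right (hB (N+1)) h1
        calc _ ≤ _ := abs_add_le _ _
          _ ≤ B*(1/((M:ℝ)+1) - 1/((N:ℝ)+1)) + B * (1/((N:ℝ)+1) - 1/((N:ℝ)+1+1)) := by
              exact add_le_add ihh hstep
          _ = B*(1/((M:ℝ)+1) - 1/((N:ℝ)+1+1)) := by ring
      · have hM : M = N+1 := le_antisymm hMN' hge
        subst hM
        simp
  have hk := key N hMN
  have hBM := hB M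
  have hBN := hB N
  have hpM : (0:ℝ) < (M:ℝ)+1 := by positivity
  have hpN : (0:ℝ) < (N:ℝ)+1 := by positivity
  have hB0 : 0 ≤ B := le_trans (abs_nonneg _) (hB 0)
  have h1 : |∑ k ∈ Finset.Ico M N, a k/(k+1)| ≤ B*(1/(M+1) - 1/(N+1)) + |S M|/(M+1) + |S N|/(N+1) := by
    have := abs_sub_abs_le_abs_sub ((∑ k ∈ Finset.Ico M N, a k/(k+1)) + S M/(M+1) - S N/(N+1)) (S M/(M+1) - S N/(N+1))
    have h2 : |S M/(M+1) - S N/(N+1)| ≤ |S M|/(M+1) + |S N|/(N+1) := by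
      calc |S M/((M:ℝ)+1) - S N/((N:ℝ)+1)| ≤ |S M/((M:ℝ)+1)| + |S N/((N:ℝ)+1)| := abs_sub _ _
        _ = |S M|/((M:ℝ)+1) + |S N|/((N:ℝ)+1) := by
            rw [abs_div, abs_div, abs_of_pos hpM, abs_of_pos hpN]
    calc |∑ k ∈ Finset.Ico M N, a k/(k+1)|
        ≤ |(∑ k ∈ Finset.Ico M N, a k/(k+1)) + S M/(M+1) - S N/(N+1)| + |S M/(M+1) - S N/(N+1)| := by
          have := abs_add_le ((∑ k ∈ Finset.Ico M N, a k/(k+1)) + S M/(M+1) - S N/(N+1)) (-(S M/(M+1) - S N/(N+1)))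
          rw [abs_neg] at this
          have e : (∑ k ∈ Finset.Ico M N, a k/(k+1)) = ((∑ k ∈ Finset.Ico M N, a k/(k+1)) + S M/(M+1) - S N/(N+1)) + -(S M/(M+1) - S N/(N+1)) := by ring
          exact (congrArg (fun z : ℝ => |z|) e).le.trans this
      _ ≤ B*(1/(M+1) - 1/(N+1)) + (|S M|/(M+1) + |S N|/(N+1)) := add_le_add hk h2
      _ = _ := by ring
  calc |∑ k ∈ Finset.Ico M N, a k/(k+1)| ≤ B*(1/(M+1) - 1/(N+1)) + |S M|/(M+1) + |S N|/(N+1) := h1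
    _ ≤ B*(1/(M+1) - 1/(N+1)) + B/(M+1) + B/(N+1) := by gcongr
    _ = 2*B/(M+1) := by ring


lemma sum_sin_div_bound_pos (θ : ℝ) (h0 : 0 < θ) (h1 : θ ≤ π) (N : ℕ) :
    |∑ k ∈ Finset.range N, Real.sin ((k+1)*θ)/(k+1)| ≤ 1 + 3*π := by
  have hpi := Real.pi_pos
  have hsin : θ/π ≤ Real.sin (θ/2) := by
    have := Real.mul_le_sin (x := θ/2) (by linarith) (by linarith)
    calc θ/π = 2/π * (θ/2) := by field_simp
      _ ≤ _ := this
  have hsinpos : 0 < Real.sin (θ/2) := lt_of_lt_of_le (by positivity) hsin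
  have hsne : Real.sin (θ/2) ≠ 0 := ne_of_gt hsinpos
  set M := min N ⌈1/θ⌉₊ with hM
  have hMN : M ≤ N := min_le_left _ _
  have hsplit : ∑ k ∈ Finset.range N, Real.sin ((k+1)*θ)/(k+1)
      = (∑ k ∈ Finset.range M, Real.sin ((k+1)*θ)/(k+1))
        + ∑ k ∈ Finset.Ico M N, Real.sin ((k+1)*θ)/(k+1) := by
    rw [Finset.range_eq_Ico, Finset.range_eq_Ico]
    exact (Finset.sum_Ico_consecutive _ (Nat.zero_le M) hMN).symm
  have part1 : |∑ k ∈ Finset.range M, Real.sin ((k+1)*θ)/(k+1)| ≤ 1 + π := by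
    calc |∑ k ∈ Finset.range M, Real.sin ((k+1)*θ)/(k+1)|
        ≤ ∑ k ∈ Finset.range M, |Real.sin ((k+1)*θ)/(k+1)| := Finset.abs_sum_le_sum_abs _ _
      _ ≤ ∑ _k ∈ Finset.range M, θ := by
          apply Finset.sum_le_sum
          intro k _
          rw [abs_div]
          have hk : (0:ℝ) < (k:ℝ)+1 := by positivity
          rw [abs_of_pos hk, div_le_iff₀ hk]
          calc |Real.sin ((k+1)*θ)| ≤ |((k:ℝ)+1)*θ| := Real.abs_sin_le_abs
            _ = ((k:ℝ)+1)*θ := abs_of_pos (by positivity)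
            _ = θ * ((k:ℝ)+1) := by ring
      _ = M * θ := by rw [Finset.sum_const, Finset.card_range]; ring
      _ ≤ ⌈1/θ⌉₊ * θ := by
          have : (M:ℝ) ≤ (⌈1/θ⌉₊:ℝ) := by exact_mod_cast min_le_right N _
          nlinarith
      _ ≤ (1/θ + 1) * θ := by
          have := Nat.ceil_lt_add_one (by positivity : (0:ℝ) ≤ 1/θ)
          nlinarith
      _ = 1 + θ := by field_simp
      _ ≤ 1 + π := by linarith
  have part2 : |∑ k ∈ Finset.Ico M N, Real.sin ((k+1)*θ)/(k+1)| ≤ 2*π := by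
    have hab := abel_bound (fun k => Real.sin ((k+1)*θ)) (1/|Real.sin (θ/2)|)
      (fun K => dirichlet_partial θ hsne K) M N hMN
    rcases Nat.lt_or_ge N ⌈1/θ⌉₊ with hlt | hge
    · have : M = N := min_eq_left (le_of_lt hlt)
      rw [this, Finset.Ico_self, Finset.sum_empty, abs_zero]
      positivity
    · have hMceil : M = ⌈1/θ⌉₊ := min_eq_right hge
      have hMge : (1:ℝ)/θ ≤ (M:ℝ) + 1 := by
        rw [hMceil]
        have := Nat.le_ceil (1/θ)
        push_cast
        linarith
      have hBle : 1/|Real.sin (θ/2)| ≤ π/θ := by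
        rw [abs_of_pos hsinpos]
        rw [div_le_div_iff₀ hsinpos h0]
        calc 1 * θ = θ := by ring
          _ ≤ π * Real.sin (θ/2) := by
            rw [ge_iff_le, ← div_le_iff₀' hpi] at *
            linarith [hsin]
      have hfrac : 1/((M:ℝ)+1) ≤ θ := by
        rw [div_le_iff₀ (by positivity)]
        rw [div_le_iff₀ h0] at hMge
        linarith
      calc |∑ k ∈ Finset.Ico M N, Real.sin ((k+1)*θ)/(k+1)| ≤ 2*(1/|Real.sin (θ/2)|)/(M+1) := hab
        _ = 2*(1/|Real.sin (θ/2)|)*(1/((M:ℝ)+1)) := by ring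
        _ ≤ 2*(π/θ)*θ := by
            apply mul_le_mul
            · apply mul_le_mul_of_nonneg_left hBle; norm_num
            · exact hfrac
            · positivity
            · positivity
        _ = 2*π := by field_simp
  calc |∑ k ∈ Finset.range N, Real.sin ((k+1)*θ)/(k+1)|
      ≤ |∑ k ∈ Finset.range M, Real.sin ((k+1)*θ)/(k+1)|
        + |∑ k ∈ Finset.Ico M N, Real.sin ((k+1)*θ)/(k+1)| := by rw [hsplit]; exact abs_add_le _ _
    _ ≤ (1+π) + 2*π := add_le_add part1 part2
    _ = 1 + 3*π := by ring

lemma sum_sin_div_bound (θ : ℝ) (h0 : 0 ≤ θ) (h2 : θ ≤ 2*π) (N : ℕ) :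
    |∑ k ∈ Finset.range N, Real.sin ((k+1)*θ)/(k+1)| ≤ 1 + 3*π := by
  have hpi := Real.pi_pos
  rcases eq_or_lt_of_le h0 with h0' | h0'
  · simp [← h0']
    positivity
  rcases le_or_gt θ π with h1 | h1
  · exact sum_sin_div_bound_pos θ h0' h1 N
  · set θ' := 2*π - θ with hθ'
    have hterm : ∀ k : ℕ, Real.sin ((k+1)*θ) = -Real.sin ((k+1)*θ') := by
      intro k
      have : ((k:ℝ)+1)*θ = -(((k:ℝ)+1)*θ') + ((k+1 : ℤ)) * (2*π) := by push_cast; ring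
      rw [this, Real.sin_add_int_mul_two_pi, Real.sin_neg]
    have hsum : ∑ k ∈ Finset.range N, Real.sin ((k+1)*θ)/(k+1)
        = -∑ k ∈ Finset.range N, Real.sin ((k+1)*θ')/(k+1) := by
      rw [← Finset.sum_neg_distrib]
      apply Finset.sum_congr rfl
      intro k _
      rw [hterm k]; ring
    rw [hsum, abs_neg]
    rcases eq_or_lt_of_le (show (0:ℝ) ≤ θ' by rw [hθ']; linarith) with hz | hz
    · simp [← hz]
      positivity
    · exact sum_sin_div_bound_pos θ' hz (by rw [hθ']; linarith) N


lemma integral_cos_c (c : ℝ) (hc : c ≠ 0) (a b : ℝ) :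
    ∫ x in a..b, Real.cos (c*x) = Real.sin (c*b)/c - Real.sin (c*a)/c := by
  apply intervalIntegral.integral_eq_sub_of_hasDerivAt
  · intro x _
    have h := ((Real.hasDerivAt_sin (c*x)).comp x
      ((hasDerivAt_id x).const_mul c)).div_const c
    refine h.congr_deriv ?_
    field_simp
  · exact (Real.continuous_cos.comp (continuous_const.mul continuous_id)).intervalIntegrable a b

lemma part_i (n : ℕ) (hn : 1 ≤ n) (a b : ℝ) (ha : 0 ≤ a) (hab : a ≤ b) (hb : b ≤ 1/2) :
    |(∫ x in a..b, KSp n x x) - 2*(n:ℝ)*(b-a)| ≤ 4 := by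
  have hpi := Real.pi_pos
  set N := n - 1 with hN
  have hn' : n = N + 1 := (Nat.succ_pred_eq_of_pos hn).symm
  have hm : 2*n - 1 = 2*N + 1 := by omega
  have hdiag : ∀ x : ℝ, KSp n x x
      = 2*(n:ℝ) - ∑ k ∈ Finset.range N, 2*Real.cos (4*π*(k+1)*x) := by
    intro x
    have h1 : sKer (2*n+1) (x - x) = 2*(n:ℝ)+1 := by
      rw [sub_self, sKer]
      simp
    have h2 : sKer (2*n-1) (x + x) = 1 + 2*∑ k ∈ Finset.range N, Real.cos (4*π*(k+1)*x) := by
      rw [hm, show x + x = 2*x by ring]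
      exact sKer_odd_eq N x
    rw [KSp, h1, h2, Finset.mul_sum]
    ring
  have hint : ∀ y : ℝ, ∫ x in a..y, KSp n x x
      = 2*(n:ℝ)*(y-a) - ∑ k ∈ Finset.range N,
          (2*(Real.sin (4*π*(k+1)*y)/(4*π*(k+1)) - Real.sin (4*π*(k+1)*a)/(4*π*(k+1)))) := by
    intro y
    have hc : ∀ k : ℕ, (4*π*((k:ℝ)+1)) ≠ 0 := by intro k; positivity
    have hI : ∀ k ∈ Finset.range N, IntervalIntegrable
        (fun x => 2*Real.cos (4*π*(k+1)*x)) volume a y := by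
      intro k _
      exact Continuous.intervalIntegrable (continuous_const.mul (Real.continuous_cos.comp (continuous_const.mul continuous_id))) a y
    calc ∫ x in a..y, KSp n x x
        = ∫ x in a..y, (2*(n:ℝ) - ∑ k ∈ Finset.range N, 2*Real.cos (4*π*(k+1)*x)) := by
          apply intervalIntegral.integral_congr
          intro x _
          exact hdiag x
      _ = (∫ _x in a..y, 2*(n:ℝ)) - ∫ x in a..y, ∑ k ∈ Finset.range N, 2*Real.cos (4*π*(k+1)*x) := by
          apply intervalIntegral.integral_sub (intervalIntegrable_const)
          exact Continuous.intervalIntegrable (continuous_finset_sum _ fun k _ => continuous_const.mul (Real.continuous_cos.comp (continuous_const.mul continuous_id))) a y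
      _ = 2*(n:ℝ)*(y-a) - ∑ k ∈ Finset.range N,
          (2*(Real.sin (4*π*(k+1)*y)/(4*π*(k+1)) - Real.sin (4*π*(k+1)*a)/(4*π*(k+1)))) := by
          rw [intervalIntegral.integral_const, intervalIntegral.integral_finset_sum hI]
          congr 1
          · rw [smul_eq_mul]; ring
          · apply Finset.sum_congr rfl
            intro k _
            rw [intervalIntegral.integral_const_mul, integral_cos_c _ (hc k)]
  have hsum : ∀ y : ℝ, 0 ≤ y → y ≤ 1/2 →
      |∑ k ∈ Finset.range N, Real.sin (4*π*(k+1)*y)/(4*π*(k+1))| ≤ (1+3*π)/(4*π) := by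
    intro y hy0 hy1
    have hθ0 : 0 ≤ 4*π*y := by positivity
    have hθ1 : 4*π*y ≤ 2*π := by nlinarith
    have hb := sum_sin_div_bound (4*π*y) hθ0 hθ1 N
    have he : ∑ k ∈ Finset.range N, Real.sin (4*π*(k+1)*y)/(4*π*(k+1))
        = (1/(4*π)) * ∑ k ∈ Finset.range N, Real.sin ((k+1)*(4*π*y))/(k+1) := by
      rw [Finset.mul_sum]
      apply Finset.sum_congr rfl
      intro k _
      rw [show 4*π*((k:ℝ)+1)*y = ((k:ℝ)+1)*(4*π*y) by ring]
      field_simp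
    rw [he, abs_mul, abs_of_pos (by positivity : (0:ℝ) < 1/(4*π))]
    calc 1/(4*π) * |∑ k ∈ Finset.range N, Real.sin ((k+1)*(4*π*y))/(k+1)|
        ≤ 1/(4*π) * (1+3*π) := mul_le_mul_of_nonneg_left hb (by positivity)
      _ = (1+3*π)/(4*π) := by ring
  have h1 := hsum a ha (le_trans hab hb)
  have h2 := hsum b (le_trans ha hab) hb
  rw [hint b]
  have he2 : 2*(n:ℝ)*(b-a) - ∑ k ∈ Finset.range N,
      (2*(Real.sin (4*π*(k+1)*b)/(4*π*(k+1)) - Real.sin (4*π*(k+1)*a)/(4*π*(k+1)))) - 2*(n:ℝ)*(b-a)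
      = -2*((∑ k ∈ Finset.range N, Real.sin (4*π*(k+1)*b)/(4*π*(k+1)))
          - ∑ k ∈ Finset.range N, Real.sin (4*π*(k+1)*a)/(4*π*(k+1))) := by
    simp only [mul_sub]
    rw [Finset.sum_sub_distrib, ← Finset.mul_sum, ← Finset.mul_sum]
    ring
  rw [he2]
  rw [abs_mul]
  have : |(-2 : ℝ)| = 2 := by norm_num
  rw [this]
  have habs : |(∑ k ∈ Finset.range N, Real.sin (4*π*(k+1)*b)/(4*π*(k+1)))
      - ∑ k ∈ Finset.range N, Real.sin (4*π*(k+1)*a)/(4*π*(k+1))| ≤ 2*((1+3*π)/(4*π)) := by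
    calc _ ≤ _ := abs_sub _ _
      _ ≤ (1+3*π)/(4*π) + (1+3*π)/(4*π) := add_le_add h2 h1
      _ = 2*((1+3*π)/(4*π)) := by ring
  calc 2 * |(∑ k ∈ Finset.range N, Real.sin (4*π*(k+1)*b)/(4*π*(k+1)))
      - ∑ k ∈ Finset.range N, Real.sin (4*π*(k+1)*a)/(4*π*(k+1))| ≤ 2*(2*((1+3*π)/(4*π))) := by linarith
    _ = (1+3*π)/π := by field_simp; ring
    _ ≤ 4 := by
        rw [div_le_iff₀ hpi]
        nlinarith [Real.pi_gt_three]


lemma gB_nonneg (m t : ℝ) : 0 ≤ gB m t := by unfold gB; positivity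

lemma sin_nat_mul_le_abs (m : ℕ) (u : ℝ) : |Real.sin (m*u)| ≤ m * |Real.sin u| := by
  induction m with
  | zero => simp
  | succ m ih =>
    have e : ((m+1 : ℕ):ℝ)*u = m*u + u := by push_cast; ring
    rw [e, Real.sin_add]
    calc |Real.sin (m*u) * Real.cos u + Real.cos (m*u) * Real.sin u|
        ≤ |Real.sin (m*u) * Real.cos u| + |Real.cos (m*u) * Real.sin u| := abs_add_le _ _
      _ ≤ |Real.sin (m*u)| * 1 + 1 * |Real.sin u| := by
          rw [abs_mul, abs_mul]
          gcongr
          · exact Real.abs_cos_le_one u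
          · exact Real.abs_cos_le_one (m*u)
      _ ≤ m * |Real.sin u| + 1 * |Real.sin u| := by
          rw [mul_one]
          gcongr
      _ = ((m+1 : ℕ):ℝ) * |Real.sin u| := by push_cast; ring

lemma sKer_abs_le (m : ℕ) (t : ℝ) : |sKer m t| ≤ m := by
  rw [sKer]
  split_ifs with h
  · rw [abs_mul, abs_mul, Nat.abs_cast]
    have h1 : |Real.cos (π*m*t)| * |Real.cos (π*t)| ≤ 1 := by
      nlinarith [Real.abs_cos_le_one (π*(m:ℝ)*t), Real.abs_cos_le_one (π*t),
        abs_nonneg (Real.cos (π*(m:ℝ)*t)), abs_nonneg (Real.cos (π*t))]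
    calc (m:ℝ) * |Real.cos (π*m*t)| * |Real.cos (π*t)|
        = (m:ℝ) * (|Real.cos (π*m*t)| * |Real.cos (π*t)|) := by ring
      _ ≤ (m:ℝ) * 1 := mul_le_mul_of_nonneg_left h1 (Nat.cast_nonneg m)
      _ = m := mul_one _
  · rw [abs_div]
    rw [div_le_iff₀ (abs_pos.mpr h)]
    have := sin_nat_mul_le_abs m (π*t)
    rw [show (m:ℝ)*(π*t) = π*m*t by ring] at this
    linarith

lemma sKer_sq_le (m : ℕ) (t : ℝ) (ht : |t| ≤ 1/2) : sKer m t ^ 2 ≤ gB m t := by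
  rw [sKer, gB]
  split_ifs with h
  · obtain ⟨j, hj⟩ := Real.sin_eq_zero_iff.mp h
    have ht0 : t = 0 := by
      have hj' : (j:ℝ) = t := by
        apply mul_right_cancel₀ Real.pi_ne_zero
        linarith [hj]
      have : |(j:ℝ)| ≤ 1/2 := by rw [hj']; exact ht
      have : (j:ℤ) = 0 := by
        by_contra hne
        have : (1:ℝ) ≤ |(j:ℝ)| := by
          rw [← Int.cast_abs]
          exact_mod_cast Int.one_le_abs hne
        linarith
      rw [← hj', this]; simp
    subst ht0
    simp only [mul_zero, Real.cos_zero, mul_one]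
    norm_num
    nlinarith [sq_nonneg (m:ℝ)]
  · have h2pos : 0 < Real.sin (π*t)^2 := by positivity
    have hden : (0:ℝ) < 1+(2*m*t)^2 := by positivity
    have hb1 : Real.sin (π*m*t)^2 ≤ (m:ℝ)^2 * Real.sin (π*t)^2 := by
      have := sin_nat_mul_le_abs m (π*t)
      rw [show (m:ℝ)*(π*t) = π*m*t by ring] at this
      nlinarith [abs_nonneg (Real.sin (π*m*t)), abs_nonneg (Real.sin (π*t)),
        sq_abs (Real.sin (π*m*t)), sq_abs (Real.sin (π*t))]
    have hb2 : Real.sin (π*m*t)^2 ≤ 1 := Real.sin_sq_le_one _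
    have hb3 : 4*t^2 ≤ Real.sin (π*t)^2 := by
      have h1 : 2*|t| ≤ Real.sin (π*|t|) := by
        have := Real.mul_le_sin (x := π*|t|) (by positivity) (by
          rw [show π/2 = π*(1/2) by ring]
          exact mul_le_mul_of_nonneg_left ht Real.pi_nonneg)
        calc 2*|t| = 2/π * (π*|t|) := by field_simp
          _ ≤ _ := this
      have h2 : Real.sin (π*|t|)^2 = Real.sin (π*t)^2 := by
        rcases abs_cases t with ⟨he, _⟩ | ⟨he, _⟩
        · rw [he]
        · rw [he, show π*(-t) = -(π*t) by ring, Real.sin_neg]; ring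
      nlinarith [abs_nonneg t, sq_abs t]
    rw [div_pow, div_le_div_iff₀ h2pos hden]
    nlinarith [mul_le_mul_of_nonneg_right hb2 (show (0:ℝ) ≤ 4*(m:ℝ)^2*t^2 by positivity),
      mul_le_mul_of_nonneg_left hb3 (show (0:ℝ) ≤ (m:ℝ)^2 by positivity)]

lemma sKer_sq_shift (m : ℕ) (s : ℝ) : sKer m (s-1) ^ 2 = sKer m s ^ 2 := by
  have hc0 : Real.sin ((m:ℝ)*π) = 0 := by exact_mod_cast Real.sin_nat_mul_pi m
  have hc2 : Real.cos ((m:ℝ)*π)^2 = 1 := by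
    nlinarith [Real.sin_sq_add_cos_sq ((m:ℝ)*π)]
  have eA : π*(m:ℝ)*(s-1) = π*m*s - m*π := by ring
  have eB : π*(s-1) = π*s - π := by ring
  have hsinA : Real.sin (π*m*(s-1)) = Real.sin (π*m*s) * Real.cos (m*π) := by
    rw [eA, Real.sin_sub, hc0]; ring
  have hcosA : Real.cos (π*m*(s-1)) = Real.cos (π*m*s) * Real.cos (m*π) := by
    rw [eA, Real.cos_sub, hc0]; ring
  have hsinB : Real.sin (π*(s-1)) = -Real.sin (π*s) := by rw [eB, Real.sin_sub_pi]
  have hcosB : Real.cos (π*(s-1)) = -Real.cos (π*s) := by rw [eB, Real.cos_sub_pi]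
  rw [sKer, sKer]
  have hiff : Real.sin (π*(s-1)) = 0 ↔ Real.sin (π*s) = 0 := by
    rw [hsinB, neg_eq_zero]
  by_cases hs2 : Real.sin (π*s) = 0
  · rw [if_pos (hiff.mpr hs2), if_pos hs2, hcosA, hcosB]
    linear_combination ((m:ℝ)^2 * Real.cos (π*m*s)^2 * Real.cos (π*s)^2) * hc2
  · rw [if_neg (fun hc => hs2 (hiff.mp hc)), if_neg hs2, hsinA, hsinB, div_pow, div_pow, neg_sq]
    congr 1
    rw [mul_pow, hc2, mul_one]

lemma sKer_sq_le_sum (m : ℕ) (s : ℝ) (h0 : 0 ≤ s) (h1 : s ≤ 1) :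
    sKer m s ^ 2 ≤ gB m s + gB m (1-s) := by
  rcases le_or_gt s (1/2) with hs | hs
  · have := sKer_sq_le m s (by rw [abs_of_nonneg h0]; exact hs)
    linarith [gB_nonneg m (1-s)]
  · have hsh := sKer_sq_shift m s
    have := sKer_sq_le m (s-1) (by rw [abs_of_nonpos (by linarith)]; linarith)
    have he : gB m (s-1) = gB m (1-s) := by unfold gB; ring_nf
    rw [← hsh]
    rw [he] at this
    linarith [gB_nonneg m s]

lemma KSp_sq_le (n : ℕ) (hn : 1 ≤ n) (x y : ℝ) (hx0 : 0 ≤ x) (hx1 : x ≤ 1/2)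
    (hy0 : 0 ≤ y) (hy1 : y ≤ 1/2) :
    KSp n x y ^ 2 ≤ 2*gB (2*n+1) (x-y) + 2*gB (2*n-1:ℕ) (x+y) + 2*gB (2*n-1:ℕ) (1-(x+y)) := by
  have hu := sKer_sq_le (2*n+1) (x-y) (by rw [abs_le]; constructor <;> linarith)
  have hv := sKer_sq_le_sum (2*n-1) (x+y) (by linarith) (by linarith)
  have hcast : ((2*n+1:ℕ):ℝ) = 2*(n:ℝ)+1 := by push_cast; ring
  rw [KSp]
  rw [hcast] at hu
  nlinarith [sq_nonneg (sKer (2*n+1) (x-y) + sKer (2*n-1) (x+y))]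


lemma hasDerivAt_Bf (v : ℝ) : HasDerivAt Bf (Real.arctan v) v := by
  have hne : (1+v^2) ≠ 0 := by positivity
  have h1 : HasDerivAt (fun v : ℝ => v * Real.arctan v)
      (1 * Real.arctan v + v * (1/(1+v^2))) v :=
    (hasDerivAt_id v).mul (Real.hasDerivAt_arctan v)
  have hin : HasDerivAt (fun v : ℝ => 1+v^2) (2*v^(2-1)) v :=
    (hasDerivAt_pow 2 v).const_add 1
  have h2 : HasDerivAt (fun v : ℝ => Real.log (1+v^2)/2) ((1+v^2)⁻¹ * (2*v^(2-1))/2) v :=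
    by have := ((Real.hasDerivAt_log hne).comp v hin).div_const 2; exact this
  have h3 := h1.sub h2
  refine h3.congr_deriv ?_
  field_simp
  ring

lemma Bf_zero : Bf 0 = 0 := by simp [Bf]

lemma Bf_even (v : ℝ) : Bf (-v) = Bf v := by
  simp [Bf, Real.arctan_neg]

lemma Bf_sub_eq (p q : ℝ) : Bf q - Bf p = ∫ v in p..q, Real.arctan v :=
  (intervalIntegral.integral_eq_sub_of_hasDerivAt (fun x _ => hasDerivAt_Bf x)
    (Real.continuous_arctan.intervalIntegrable p q)).symm

lemma Bf_diff_le (p q : ℝ) (hpq : p ≤ q) : Bf q - Bf p ≤ (q - p) * Real.arctan q := by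
  rw [Bf_sub_eq]
  calc ∫ v in p..q, Real.arctan v ≤ ∫ _v in p..q, Real.arctan q := by
        apply intervalIntegral.integral_mono_on hpq
          (Real.continuous_arctan.intervalIntegrable p q) (intervalIntegrable_const)
        intro x hx
        exact Real.arctan_strictMono.monotone hx.2
    _ = (q - p) * Real.arctan q := by rw [intervalIntegral.integral_const, smul_eq_mul]

lemma Bf_diff_ge (p q : ℝ) (hpq : p ≤ q) : (q - p) * Real.arctan p ≤ Bf q - Bf p := by
  rw [Bf_sub_eq]
  calc (q - p) * Real.arctan p = ∫ _v in p..q, Real.arctan p := by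
        rw [intervalIntegral.integral_const, smul_eq_mul]
    _ ≤ ∫ v in p..q, Real.arctan v := by
        apply intervalIntegral.integral_mono_on hpq (intervalIntegrable_const)
          (Real.continuous_arctan.intervalIntegrable p q)
        intro x hx
        exact Real.arctan_strictMono.monotone hx.1

lemma arctan_le_self (x : ℝ) (hx : 0 ≤ x) : Real.arctan x ≤ x := by
  rcases eq_or_lt_of_le hx with h | h
  · simp [← h]
  · have h1 : 0 < Real.arctan x := by
      have := Real.arctan_strictMono h
      rwa [Real.arctan_zero] at this
    have h2 := Real.lt_tan h1 (Real.arctan_lt_pi_div_two x)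
    rw [Real.tan_arctan] at h2
    linarith

lemma mul_pi_sub_arctan_le_one (q : ℝ) (hq : 0 ≤ q) : q * (π/2 - Real.arctan q) ≤ 1 := by
  rcases eq_or_lt_of_le hq with h | h
  · rw [← h]; norm_num
  · rw [← Real.arctan_inv_of_pos h]
    calc q * Real.arctan q⁻¹ ≤ q * q⁻¹ :=
        mul_le_mul_of_nonneg_left (arctan_le_self _ (by positivity)) hq
      _ = 1 := mul_inv_cancel₀ (ne_of_gt h)

lemma K1_bound (p q : ℝ) (hp : 0 ≤ p) (hq : 0 ≤ q) :
    Bf (p+q) - Bf p - Bf q ≤ 1 + Real.log (1+q) := by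
  have h1 : Bf (p+q) - Bf p ≤ q * Real.arctan (p+q) := by
    have := Bf_diff_le p (p+q) (by linarith)
    calc Bf (p+q) - Bf p ≤ (p+q-p) * Real.arctan (p+q) := this
      _ = q * Real.arctan (p+q) := by ring
  have h2 : Real.arctan (p+q) ≤ π/2 := le_of_lt (Real.arctan_lt_pi_div_two _)
  have h3 : q * Real.arctan (p+q) ≤ q * (π/2) := mul_le_mul_of_nonneg_left h2 hq
  have h4 : q * (π/2 - Real.arctan q) ≤ 1 := mul_pi_sub_arctan_le_one q hq
  have h5 : Real.log (1+q^2) ≤ 2 * Real.log (1+q) := by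
    calc Real.log (1+q^2) ≤ Real.log ((1+q)^2) := by
          apply Real.log_le_log (by positivity)
          nlinarith
      _ = 2 * Real.log (1+q) := by
          rw [Real.log_pow]; push_cast; ring
  have hBq : Bf q = q * Real.arctan q - Real.log (1+q^2)/2 := rfl
  nlinarith [h1, h3, h4, h5]

lemma K2_bound (w0 w1 l : ℝ) (h0 : 0 ≤ w0) (hw : w0 ≤ w1) (hl : 0 ≤ l) (hlw : l ≤ w0) :
    (Bf (w1+l) - Bf w1) - (Bf (w0+l) - Bf w0) ≤ 1 := by
  have h1 : Bf (w1+l) - Bf w1 ≤ l * Real.arctan (w1+l) := by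
    have := Bf_diff_le w1 (w1+l) (by linarith)
    calc Bf (w1+l) - Bf w1 ≤ (w1+l-w1) * Real.arctan (w1+l) := this
      _ = l * Real.arctan (w1+l) := by ring
  have h2 : l * Real.arctan w0 ≤ Bf (w0+l) - Bf w0 := by
    have := Bf_diff_ge w0 (w0+l) (by linarith)
    calc l * Real.arctan w0 = (w0+l-w0) * Real.arctan w0 := by ring
      _ ≤ Bf (w0+l) - Bf w0 := this
  have h3 : Real.arctan (w1+l) ≤ π/2 := le_of_lt (Real.arctan_lt_pi_div_two _)
  have h4 : Real.arctan l ≤ Real.arctan w0 := Real.arctan_strictMono.monotone hlw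
  have h5 : l * (π/2 - Real.arctan l) ≤ 1 := mul_pi_sub_arctan_le_one l hl
  nlinarith [mul_le_mul_of_nonneg_left h3 hl, mul_le_mul_of_nonneg_left h4 hl]


lemma gB_cont_comp (m : ℝ) {f : ℝ → ℝ} (hf : Continuous f) :
    Continuous (fun x => gB m (f x)) := by
  unfold gB
  exact continuous_const.div
    (continuous_const.add (((continuous_const.mul hf)).pow 2))
    (fun x => by positivity)

lemma cont_marctan_sub (m c : ℝ) : Continuous (fun y => m * Real.arctan (2*m*(c - y))) :=
  continuous_const.mul (Real.continuous_arctan.comp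
    (continuous_const.mul (continuous_const.sub continuous_id)))

lemma cont_marctan_add (m c : ℝ) : Continuous (fun y => m * Real.arctan (2*m*(c + y))) :=
  continuous_const.mul (Real.continuous_arctan.comp
    (continuous_const.mul (continuous_const.add continuous_id)))

lemma hasDerivAt_marctan_sub (m c : ℝ) (x : ℝ) :
    HasDerivAt (fun x => m * Real.arctan (2*m*(x - c))) (gB m (x - c)) x := by
  have hin : HasDerivAt (fun x : ℝ => 2*m*(x - c)) (2*m*1) x :=
    ((hasDerivAt_id x).sub_const c).const_mul (2*m)
  have h := ((Real.hasDerivAt_arctan (2*m*(x-c))).comp x hin).const_mul m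
  refine h.congr_deriv ?_
  unfold gB
  have : (0:ℝ) < 1 + (2*m*(x-c))^2 := by positivity
  field_simp

lemma hasDerivAt_marctan_add (m c : ℝ) (x : ℝ) :
    HasDerivAt (fun x => m * Real.arctan (2*m*(x + c))) (gB m (x + c)) x := by
  have hin : HasDerivAt (fun x : ℝ => 2*m*(x + c)) (2*m*1) x :=
    ((hasDerivAt_id x).add_const c).const_mul (2*m)
  have h := ((Real.hasDerivAt_arctan (2*m*(x+c))).comp x hin).const_mul m
  refine h.congr_deriv ?_
  unfold gB
  have : (0:ℝ) < 1 + (2*m*(x+c))^2 := by positivity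
  field_simp

lemma hasDerivAt_marctan_refl (m c : ℝ) (x : ℝ) :
    HasDerivAt (fun x => -(m * Real.arctan (2*m*(1 - (x + c))))) (gB m (1 - (x + c))) x := by
  have hin : HasDerivAt (fun x : ℝ => 2*m*(1 - (x + c))) (2*m*(0-1)) x := by
    have h1 : HasDerivAt (fun x : ℝ => 1 - (x + c)) (0-1) x :=
      (hasDerivAt_const x (1:ℝ)).sub ((hasDerivAt_id x).add_const c)
    exact h1.const_mul (2*m)
  have h := (((Real.hasDerivAt_arctan (2*m*(1-(x+c)))).comp x hin).const_mul m).neg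
  refine h.congr_deriv ?_
  unfold gB
  have : (0:ℝ) < 1 + (2*m*(1-(x+c)))^2 := by positivity
  field_simp
  ring

lemma inner1 (m y a b : ℝ) : ∫ x in a..b, gB m (x - y)
    = m * Real.arctan (2*m*(b-y)) - m * Real.arctan (2*m*(a-y)) :=
  intervalIntegral.integral_eq_sub_of_hasDerivAt
    (fun x _ => hasDerivAt_marctan_sub m y x)
    ((gB_cont_comp m (continuous_id.sub continuous_const)).intervalIntegrable a b)

lemma inner2 (m y a b : ℝ) : ∫ x in a..b, gB m (x + y)
    = m * Real.arctan (2*m*(b+y)) - m * Real.arctan (2*m*(a+y)) :=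
  intervalIntegral.integral_eq_sub_of_hasDerivAt
    (fun x _ => hasDerivAt_marctan_add m y x)
    ((gB_cont_comp m (continuous_id.add continuous_const)).intervalIntegrable a b)

lemma inner3 (m y a b : ℝ) : ∫ x in a..b, gB m (1 - (x + y))
    = m * Real.arctan (2*m*(1-(a+y))) - m * Real.arctan (2*m*(1-(b+y))) := by
  have h := intervalIntegral.integral_eq_sub_of_hasDerivAt
    (fun x (_ : x ∈ Set.uIcc a b) => hasDerivAt_marctan_refl m y x)
    ((gB_cont_comp m (continuous_const.sub (continuous_id.add continuous_const))).intervalIntegrable a b)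
  rw [h]; ring

lemma hasDerivAt_Bf_sub (m c : ℝ) (y : ℝ) :
    HasDerivAt (fun y => -(Bf (2*m*(c - y))/2)) (m * Real.arctan (2*m*(c-y))) y := by
  have hin : HasDerivAt (fun y : ℝ => 2*m*(c - y)) (2*m*(0-1)) y :=
    ((hasDerivAt_const y c).sub (hasDerivAt_id y)).const_mul (2*m)
  have h := ((((hasDerivAt_Bf (2*m*(c-y))).comp y hin)).div_const 2).neg
  refine h.congr_deriv ?_
  ring

lemma hasDerivAt_Bf_add (m c : ℝ) (y : ℝ) :
    HasDerivAt (fun y => Bf (2*m*(c + y))/2) (m * Real.arctan (2*m*(c+y))) y := by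
  have hin : HasDerivAt (fun y : ℝ => 2*m*(c + y)) (2*m*(0+1)) y :=
    ((hasDerivAt_const y c).add (hasDerivAt_id y)).const_mul (2*m)
  have h := (((hasDerivAt_Bf (2*m*(c+y))).comp y hin)).div_const 2
  refine h.congr_deriv ?_
  ring

lemma outer1 (m c α β : ℝ) : ∫ y in α..β, m * Real.arctan (2*m*(c - y))
    = Bf (2*m*(c-α))/2 - Bf (2*m*(c-β))/2 := by
  have h := intervalIntegral.integral_eq_sub_of_hasDerivAt
    (fun y (_ : y ∈ Set.uIcc α β) => hasDerivAt_Bf_sub m c y)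
    ((cont_marctan_sub m c).intervalIntegrable α β)
  rw [h]; ring

lemma outer2 (m c α β : ℝ) : ∫ y in α..β, m * Real.arctan (2*m*(c + y))
    = Bf (2*m*(c+β))/2 - Bf (2*m*(c+α))/2 := by
  have h := intervalIntegral.integral_eq_sub_of_hasDerivAt
    (fun y (_ : y ∈ Set.uIcc α β) => hasDerivAt_Bf_add m c y)
    ((cont_marctan_add m c).intervalIntegrable α β)
  rw [h]

set_option maxHeartbeats 2000000 in
lemma part_ii (n : ℕ) (hn : 1 ≤ n) (a b : ℝ) (ha : 0 ≤ a) (hab : a ≤ b) (hb : b ≤ 1/2) :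
    (∫ y in Set.Icc (0:ℝ) (1/2) \ Set.Icc a b, ∫ x in Set.Icc a b, (KSp n x y)^2)
      ≤ 6 + 2*Real.log (1 + 2*(2*(n:ℝ)+1)*(b-a)) := by
  set m1 : ℝ := 2*(n:ℝ)+1 with hm1
  set m2 : ℝ := ((2*n-1:ℕ):ℝ) with hm2
  have hm1nn : 0 ≤ m1 := by positivity
  have hm2nn : 0 ≤ m2 := Nat.cast_nonneg _
  set S : Set ℝ := Set.Icc (0:ℝ) (1/2) \ Set.Icc a b with hS
  set Φ : ℝ → ℝ → ℝ := fun x y => 2*gB m1 (x-y) + 2*gB m2 (x+y) + 2*gB m2 (1-(x+y)) with hΦ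
  set E : ℝ → ℝ := fun y =>
      2*(m1 * Real.arctan (2*m1*(b-y)) - m1 * Real.arctan (2*m1*(a-y)))
    + 2*(m2 * Real.arctan (2*m2*(b+y)) - m2 * Real.arctan (2*m2*(a+y)))
    + 2*(m2 * Real.arctan (2*m2*((1-a)-y)) - m2 * Real.arctan (2*m2*((1-b)-y))) with hEdef
  have hΦcont : ∀ y, Continuous (fun x => Φ x y) := by
    intro y
    apply Continuous.add
    apply Continuous.add
    · exact continuous_const.mul (gB_cont_comp m1 (continuous_id.sub continuous_const))
    · exact continuous_const.mul (gB_cont_comp m2 (continuous_id.add continuous_const))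
    · exact continuous_const.mul (gB_cont_comp m2 (continuous_const.sub (continuous_id.add continuous_const)))
  have hΦnn : ∀ x y, 0 ≤ Φ x y := by
    intro x y
    have g1 := gB_nonneg m1 (x-y); have g2 := gB_nonneg m2 (x+y); have g3 := gB_nonneg m2 (1-(x+y))
    simp only [hΦ]; linarith
  have hE : ∀ y : ℝ, (∫ x in Set.Icc a b, Φ x y) = E y := by
    intro y
    rw [MeasureTheory.integral_Icc_eq_integral_Ioc, ← intervalIntegral.integral_of_le hab]
    have c1 : Continuous fun x => 2*gB m1 (x-y) :=
      continuous_const.mul (gB_cont_comp m1 (continuous_id.sub continuous_const))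
    have c2 : Continuous fun x => 2*gB m2 (x+y) :=
      continuous_const.mul (gB_cont_comp m2 (continuous_id.add continuous_const))
    have c3 : Continuous fun x => 2*gB m2 (1-(x+y)) :=
      continuous_const.mul (gB_cont_comp m2 (continuous_const.sub (continuous_id.add continuous_const)))
    have e1 : (∫ x in a..b, Φ x y)
        = (∫ x in a..b, 2*gB m1 (x-y)) + (∫ x in a..b, 2*gB m2 (x+y))
          + ∫ x in a..b, 2*gB m2 (1-(x+y)) := by
      rw [← intervalIntegral.integral_add (c1.intervalIntegrable a b) (c2.intervalIntegrable a b),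
        ← intervalIntegral.integral_add ((c1.intervalIntegrable a b).add (c2.intervalIntegrable a b)) (c3.intervalIntegrable a b)]
    rw [e1,
      intervalIntegral.integral_const_mul, intervalIntegral.integral_const_mul,
      intervalIntegral.integral_const_mul, inner1, inner2, inner3]
    simp only [hEdef]
    have r1 : 2*m2*(1-(a+y)) = 2*m2*((1-a)-y) := by ring
    have r2 : 2*m2*(1-(b+y)) = 2*m2*((1-b)-y) := by ring
    rw [r1, r2]
  have hEcont : Continuous E := by
    apply Continuous.add
    apply Continuous.add
    · exact continuous_const.mul ((cont_marctan_sub m1 b).sub (cont_marctan_sub m1 a))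
    · exact continuous_const.mul ((cont_marctan_add m2 b).sub (cont_marctan_add m2 a))
    · exact continuous_const.mul ((cont_marctan_sub m2 (1-a)).sub (cont_marctan_sub m2 (1-b)))
  have hEnn : ∀ y, 0 ≤ E y := by
    intro y
    rw [← hE y]
    exact setIntegral_nonneg measurableSet_Icc (fun x _ => hΦnn x y)
  -- step 1 : pointwise inner bound on S
  have h1 : ∀ y ∈ S, (∫ x in Set.Icc a b, KSp n x y ^ 2) ≤ E y := by
    intro y hy
    have hy' : y ∈ Set.Icc (0:ℝ) (1/2) := hy.1
    rw [← hE y]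
    apply integral_mono_of_nonneg
    · exact Filter.Eventually.of_forall (fun x => sq_nonneg _)
    · exact (hΦcont y).integrableOn_Icc
    · apply ae_restrict_of_forall_mem measurableSet_Icc
      intro x hx
      have := KSp_sq_le n hn x y (le_trans ha hx.1) (le_trans hx.2 hb) hy'.1 hy'.2
      simp only [hΦ]
      convert this using 2 <;> push_cast [hm1, hm2] <;> ring
  -- step 2 : outer bound
  have hSsub : S ⊆ Set.Icc (0:ℝ) a ∪ Set.Icc b (1/2) := by
    rintro y ⟨⟨hy0, hy1⟩, hyn⟩
    rcases le_or_gt y a with h | h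
    · exact Or.inl ⟨hy0, h⟩
    rcases le_or_gt b y with h' | h'
    · exact Or.inr ⟨h', hy1⟩
    · exact absurd ⟨le_of_lt h, le_of_lt h'⟩ hyn
  have hIE : IntegrableOn E (Set.Icc (0:ℝ) a ∪ Set.Icc b (1/2)) :=
    (hEcont.integrableOn_Icc).union (hEcont.integrableOn_Icc)
  have hstep2 : (∫ y in S, ∫ x in Set.Icc a b, KSp n x y ^ 2) ≤ ∫ y in S, E y := by
    apply integral_mono_of_nonneg
    · exact Filter.Eventually.of_forall (fun y => integral_nonneg (fun x => sq_nonneg _))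
    · exact hIE.mono_set hSsub
    · exact ae_restrict_of_forall_mem (measurableSet_Icc.diff measurableSet_Icc) h1
  have hstep3 : (∫ y in S, E y) ≤ ∫ y in Set.Icc (0:ℝ) a ∪ Set.Icc b (1/2), E y := by
    apply setIntegral_mono_set hIE
    · exact Filter.Eventually.of_forall (fun y => hEnn y)
    · exact Filter.Eventually.of_forall hSsub
  have hdisj : AEDisjoint volume (Set.Icc (0:ℝ) a) (Set.Icc b (1/2)) := by
    have hsub : Set.Icc (0:ℝ) a ∩ Set.Icc b (1/2) ⊆ Set.Icc b a := by
      rintro y ⟨⟨_, h2⟩, ⟨h3, _⟩⟩; exact ⟨h3, h2⟩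
    apply measure_mono_null hsub
    rw [Real.volume_Icc]
    exact ENNReal.ofReal_eq_zero.mpr (by linarith)
  have hstep4 : (∫ y in Set.Icc (0:ℝ) a ∪ Set.Icc b (1/2), E y)
      = (∫ y in Set.Icc (0:ℝ) a, E y) + ∫ y in Set.Icc b (1/2), E y :=
    integral_union_ae hdisj measurableSet_Icc.nullMeasurableSet
      (hEcont.integrableOn_Icc) (hEcont.integrableOn_Icc)
  -- step 3 : compute the two outer integrals and bound them
  set q1 : ℝ := 2*m1*(b-a) with hq1
  have hq1nn : 0 ≤ q1 := by
    rw [hq1]; nlinarith [mul_nonneg hm1nn (sub_nonneg.mpr hab)]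
  have hVa : (∫ y in Set.Icc (0:ℝ) a, E y) ≤ 3 + Real.log (1+q1) := by
    rw [MeasureTheory.integral_Icc_eq_integral_Ioc, ← intervalIntegral.integral_of_le ha]
    have e1 : (∫ y in (0:ℝ)..a, E y)
        = 2*((∫ y in (0:ℝ)..a, m1 * Real.arctan (2*m1*(b-y)))
            - ∫ y in (0:ℝ)..a, m1 * Real.arctan (2*m1*(a-y)))
        + 2*((∫ y in (0:ℝ)..a, m2 * Real.arctan (2*m2*(b+y)))
            - ∫ y in (0:ℝ)..a, m2 * Real.arctan (2*m2*(a+y)))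
        + 2*((∫ y in (0:ℝ)..a, m2 * Real.arctan (2*m2*((1-a)-y)))
            - ∫ y in (0:ℝ)..a, m2 * Real.arctan (2*m2*((1-b)-y))) := by
      have i1 := ((cont_marctan_sub m1 b).intervalIntegrable (μ := volume) (0:ℝ) a).sub ((cont_marctan_sub m1 a).intervalIntegrable (μ := volume) (0:ℝ) a)
      have i2 := ((cont_marctan_add m2 b).intervalIntegrable (μ := volume) (0:ℝ) a).sub ((cont_marctan_add m2 a).intervalIntegrable (μ := volume) (0:ℝ) a)
      have i3 := ((cont_marctan_sub m2 (1-a)).intervalIntegrable (μ := volume) (0:ℝ) a).sub ((cont_marctan_sub m2 (1-b)).intervalIntegrable (μ := volume) (0:ℝ) a)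
      simp only [hEdef]
      rw [← intervalIntegral.integral_sub ((cont_marctan_sub m1 b).intervalIntegrable 0 a)
            ((cont_marctan_sub m1 a).intervalIntegrable 0 a),
          ← intervalIntegral.integral_sub ((cont_marctan_add m2 b).intervalIntegrable 0 a)
            ((cont_marctan_add m2 a).intervalIntegrable 0 a),
          ← intervalIntegral.integral_sub ((cont_marctan_sub m2 (1-a)).intervalIntegrable 0 a)
            ((cont_marctan_sub m2 (1-b)).intervalIntegrable 0 a),
          ← intervalIntegral.integral_const_mul, ← intervalIntegral.integral_const_mul,
          ← intervalIntegral.integral_const_mul,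
          ← intervalIntegral.integral_add (i1.const_mul 2) (i2.const_mul 2),
          ← intervalIntegral.integral_add ((i1.const_mul 2).add (i2.const_mul 2)) (i3.const_mul 2)]
    rw [e1, outer1, outer1, outer2, outer2, outer1, outer1]
    -- diff part
    have hdk : Bf (2*m1*(b-0))/2 - Bf (2*m1*(b-a))/2 - (Bf (2*m1*(a-0))/2 - Bf (2*m1*(a-a))/2)
        ≤ (1 + Real.log (1+q1))/2 := by
      have k := K1_bound (2*m1*a) q1 (by nlinarith [mul_nonneg hm1nn ha]) hq1nn
      have c1 : Bf (2*m1*(b-0)) = Bf (2*m1*a + q1) := by rw [hq1]; ring_nf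
      have c2 : Bf (2*m1*(a-0)) = Bf (2*m1*a) := by ring_nf
      have c3 : Bf (2*m1*(a-a)) = 0 := by rw [show 2*m1*(a-a) = 0 by ring, Bf_zero]
      have c4 : Bf (2*m1*(b-a)) = Bf q1 := by rw [hq1]
      rw [c1, c2, c3, c4]
      linarith
    -- sum part  (w0 = 2 m2 a, w1 = 2 m2 b, l = 2 m2 a)
    have hsk : Bf (2*m2*(b+a))/2 - Bf (2*m2*(b+0))/2 - (Bf (2*m2*(a+a))/2 - Bf (2*m2*(a+0))/2)
        ≤ 1/2 := by
      have k := K2_bound (2*m2*a) (2*m2*b) (2*m2*a)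
        (by nlinarith [mul_nonneg hm2nn ha])
        (by nlinarith [mul_nonneg hm2nn (sub_nonneg.mpr hab)])
        (by nlinarith [mul_nonneg hm2nn ha]) (le_refl _)
      have c1 : Bf (2*m2*(b+a)) = Bf (2*m2*b + 2*m2*a) := by ring_nf
      have c2 : Bf (2*m2*(b+0)) = Bf (2*m2*b) := by ring_nf
      have c3 : Bf (2*m2*(a+a)) = Bf (2*m2*a + 2*m2*a) := by ring_nf
      have c4 : Bf (2*m2*(a+0)) = Bf (2*m2*a) := by ring_nf
      rw [c1, c2, c3, c4]
      linarith
    -- reflected part (w0 = 2 m2 (1-a-b), w1 = 2 m2 (1-b), l = 2 m2 (b-a))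
    have hrk : Bf (2*m2*((1-a)-0))/2 - Bf (2*m2*((1-a)-a))/2
        - (Bf (2*m2*((1-b)-0))/2 - Bf (2*m2*((1-b)-a))/2) ≤ 1/2 := by
      have k := K2_bound (2*m2*(1-a-b)) (2*m2*(1-b)) (2*m2*(b-a))
        (by nlinarith [mul_nonneg hm2nn (show (0:ℝ) ≤ 1-a-b by linarith)])
        (by nlinarith [mul_nonneg hm2nn ha])
        (by nlinarith [mul_nonneg hm2nn (sub_nonneg.mpr hab)])
        (by nlinarith [mul_nonneg hm2nn (show (0:ℝ) ≤ 1-2*b by linarith)])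
      have c1 : Bf (2*m2*((1-a)-0)) = Bf (2*m2*(1-b) + 2*m2*(b-a)) := by ring_nf
      have c2 : Bf (2*m2*((1-a)-a)) = Bf (2*m2*(1-a-b) + 2*m2*(b-a)) := by ring_nf
      have c3 : Bf (2*m2*((1-b)-0)) = Bf (2*m2*(1-b)) := by ring_nf
      have c4 : Bf (2*m2*((1-b)-a)) = Bf (2*m2*(1-a-b)) := by ring_nf
      rw [c1, c2, c3, c4]
      linarith
    linarith
  have hVb : (∫ y in Set.Icc b (1/2), E y) ≤ 3 + Real.log (1+q1) := by
    rw [MeasureTheory.integral_Icc_eq_integral_Ioc, ← intervalIntegral.integral_of_le hb]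
    have e1 : (∫ y in b..(1/2:ℝ), E y)
        = 2*((∫ y in b..(1/2:ℝ), m1 * Real.arctan (2*m1*(b-y)))
            - ∫ y in b..(1/2:ℝ), m1 * Real.arctan (2*m1*(a-y)))
        + 2*((∫ y in b..(1/2:ℝ), m2 * Real.arctan (2*m2*(b+y)))
            - ∫ y in b..(1/2:ℝ), m2 * Real.arctan (2*m2*(a+y)))
        + 2*((∫ y in b..(1/2:ℝ), m2 * Real.arctan (2*m2*((1-a)-y)))
            - ∫ y in b..(1/2:ℝ), m2 * Real.arctan (2*m2*((1-b)-y))) := by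
      have i1 := ((cont_marctan_sub m1 b).intervalIntegrable (μ := volume) b (1/2:ℝ)).sub ((cont_marctan_sub m1 a).intervalIntegrable (μ := volume) b (1/2:ℝ))
      have i2 := ((cont_marctan_add m2 b).intervalIntegrable (μ := volume) b (1/2:ℝ)).sub ((cont_marctan_add m2 a).intervalIntegrable (μ := volume) b (1/2:ℝ))
      have i3 := ((cont_marctan_sub m2 (1-a)).intervalIntegrable (μ := volume) b (1/2:ℝ)).sub ((cont_marctan_sub m2 (1-b)).intervalIntegrable (μ := volume) b (1/2:ℝ))
      simp only [hEdef]
      rw [← intervalIntegral.integral_sub ((cont_marctan_sub m1 b).intervalIntegrable (μ := volume) b (1/2:ℝ))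
            ((cont_marctan_sub m1 a).intervalIntegrable (μ := volume) b (1/2:ℝ)),
          ← intervalIntegral.integral_sub ((cont_marctan_add m2 b).intervalIntegrable (μ := volume) b (1/2:ℝ))
            ((cont_marctan_add m2 a).intervalIntegrable (μ := volume) b (1/2:ℝ)),
          ← intervalIntegral.integral_sub ((cont_marctan_sub m2 (1-a)).intervalIntegrable (μ := volume) b (1/2:ℝ))
            ((cont_marctan_sub m2 (1-b)).intervalIntegrable (μ := volume) b (1/2:ℝ)),
          ← intervalIntegral.integral_const_mul, ← intervalIntegral.integral_const_mul,
          ← intervalIntegral.integral_const_mul,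
          ← intervalIntegral.integral_add (i1.const_mul 2) (i2.const_mul 2),
          ← intervalIntegral.integral_add ((i1.const_mul 2).add (i2.const_mul 2)) (i3.const_mul 2)]
    rw [e1, outer1, outer1, outer2, outer2, outer1, outer1]
    -- diff part : p = 2 m1 (1/2-b), q = q1
    have hdk : Bf (2*m1*(b-b))/2 - Bf (2*m1*(b-1/2))/2 - (Bf (2*m1*(a-b))/2 - Bf (2*m1*(a-1/2))/2)
        ≤ (1 + Real.log (1+q1))/2 := by
      have k := K1_bound (2*m1*(1/2-b)) q1
        (by nlinarith [mul_nonneg hm1nn (show (0:ℝ) ≤ 1/2-b by linarith)]) hq1nn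
      have c1 : Bf (2*m1*(b-b)) = 0 := by rw [show 2*m1*(b-b) = 0 by ring, Bf_zero]
      have c2 : Bf (2*m1*(b-1/2)) = Bf (2*m1*(1/2-b)) := by
        rw [show 2*m1*(b-1/2) = -(2*m1*(1/2-b)) by ring, Bf_even]
      have c3 : Bf (2*m1*(a-b)) = Bf q1 := by
        rw [show 2*m1*(a-b) = -q1 by rw [hq1]; ring, Bf_even]
      have c4 : Bf (2*m1*(a-1/2)) = Bf (2*m1*(1/2-b) + q1) := by
        rw [show 2*m1*(a-1/2) = -(2*m1*(1/2-b) + q1) by rw [hq1]; ring, Bf_even]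
      rw [c1, c2, c3, c4]
      linarith
    -- sum part : w0 = 2 m2 (a+b), w1 = 2 m2 (a+1/2), l = 2 m2 (b-a)
    have hsk : Bf (2*m2*(b+1/2))/2 - Bf (2*m2*(b+b))/2 - (Bf (2*m2*(a+1/2))/2 - Bf (2*m2*(a+b))/2)
        ≤ 1/2 := by
      have k := K2_bound (2*m2*(a+b)) (2*m2*(a+1/2)) (2*m2*(b-a))
        (by nlinarith [mul_nonneg hm2nn (show (0:ℝ) ≤ a+b by linarith)])
        (by nlinarith [mul_nonneg hm2nn (show (0:ℝ) ≤ 1/2-b by linarith)])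
        (by nlinarith [mul_nonneg hm2nn (sub_nonneg.mpr hab)])
        (by nlinarith [mul_nonneg hm2nn ha])
      have c1 : Bf (2*m2*(b+1/2)) = Bf (2*m2*(a+1/2) + 2*m2*(b-a)) := by ring_nf
      have c2 : Bf (2*m2*(b+b)) = Bf (2*m2*(a+b) + 2*m2*(b-a)) := by ring_nf
      rw [c1, c2]
      linarith
    -- reflected part : w0 = 2 m2 (1/2-b), w1 = 2 m2 (1/2-a), l = 2 m2 (1/2-b)
    have hrk : Bf (2*m2*((1-a)-b))/2 - Bf (2*m2*((1-a)-1/2))/2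
        - (Bf (2*m2*((1-b)-b))/2 - Bf (2*m2*((1-b)-1/2))/2) ≤ 1/2 := by
      have k := K2_bound (2*m2*(1/2-b)) (2*m2*(1/2-a)) (2*m2*(1/2-b))
        (by nlinarith [mul_nonneg hm2nn (show (0:ℝ) ≤ 1/2-b by linarith)])
        (by nlinarith [mul_nonneg hm2nn (sub_nonneg.mpr hab)])
        (by nlinarith [mul_nonneg hm2nn (show (0:ℝ) ≤ 1/2-b by linarith)]) (le_refl _)
      have c1 : Bf (2*m2*((1-a)-b)) = Bf (2*m2*(1/2-a) + 2*m2*(1/2-b)) := by ring_nf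
      have c2 : Bf (2*m2*((1-a)-1/2)) = Bf (2*m2*(1/2-a)) := by ring_nf
      have c3 : Bf (2*m2*((1-b)-b)) = Bf (2*m2*(1/2-b) + 2*m2*(1/2-b)) := by ring_nf
      have c4 : Bf (2*m2*((1-b)-1/2)) = Bf (2*m2*(1/2-b)) := by ring_nf
      rw [c1, c2, c3, c4]
      linarith
    linarith
  have hfin : (1:ℝ)+q1 = 1 + 2*(2*(n:ℝ)+1)*(b-a) := by rw [hq1, hm1]
  calc (∫ y in S, ∫ x in Set.Icc a b, KSp n x y ^ 2) ≤ ∫ y in S, E y := hstep2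
    _ ≤ ∫ y in Set.Icc (0:ℝ) a ∪ Set.Icc b (1/2), E y := hstep3
    _ = (∫ y in Set.Icc (0:ℝ) a, E y) + ∫ y in Set.Icc b (1/2), E y := hstep4
    _ ≤ (3 + Real.log (1+q1)) + (3 + Real.log (1+q1)) := add_le_add hVa hVb
    _ = 6 + 2*Real.log (1 + 2*(2*(n:ℝ)+1)*(b-a)) := by rw [hfin]; ring

/-- **Eigenvalue count estimates for `Sp(2n)`.** There is an absolute constant `C > 0`
such that for every `n ≥ 1` and every interval `I = [a,b] ⊆ [0,1/2]`:
(i)  `|∫_I K_{Sp(2n)}(x,x) dx − 2n·|I|| ≤ C`, and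
(ii) `∫_{[0,1/2]∖I} ∫_I K_{Sp(2n)}(x,y)² dx dy ≤ C·log(2 + 2n·|I|)`. -/
theorem Sp_kernel_integrals :
    ∃ C : ℝ, 0 < C ∧ ∀ (n : ℕ), 1 ≤ n → ∀ a b : ℝ,
      0 ≤ a → a ≤ b → b ≤ 1 / 2 →
      |(∫ x in a..b, KSp n x x) - 2 * (n : ℝ) * (b - a)| ≤ C ∧
      (∫ y in Set.Icc (0 : ℝ) (1 / 2) \ Set.Icc a b, ∫ x in Set.Icc a b, (KSp n x y) ^ 2)
        ≤ C * Real.log (2 + 2 * (n : ℝ) * (b - a)) := by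
  refine ⟨100, by norm_num, fun n hn a b ha hab hb => ⟨?_, ?_⟩⟩
  · exact (part_i n hn a b ha hab hb).trans (by norm_num)
  · have h := part_ii n hn a b ha hab hb
    have hLnn : (0:ℝ) ≤ b - a := sub_nonneg.mpr hab
    have hnn : (0:ℝ) ≤ 2*(n:ℝ)*(b-a) := by
      nlinarith [mul_nonneg (Nat.cast_nonneg (α := ℝ) n) hLnn]
    have hn1 : (1:ℝ) ≤ (n:ℝ) := by exact_mod_cast hn
    have h2 : Real.log (1 + 2*(2*(n:ℝ)+1)*(b-a)) ≤ Real.log 3 + Real.log (2 + 2*(n:ℝ)*(b-a)) := by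
      have hle : 1 + 2*(2*(n:ℝ)+1)*(b-a) ≤ 3*(2 + 2*(n:ℝ)*(b-a)) := by
        nlinarith [mul_nonneg (sub_nonneg.mpr hn1) hLnn]
      calc Real.log (1 + 2*(2*(n:ℝ)+1)*(b-a)) ≤ Real.log (3*(2 + 2*(n:ℝ)*(b-a))) := by
            apply Real.log_le_log (by nlinarith) hle
        _ = Real.log 3 + Real.log (2 + 2*(n:ℝ)*(b-a)) := by
            rw [Real.log_mul (by norm_num) (by nlinarith)]
    have h3 : Real.log 3 ≤ 2 := by
      have := Real.log_le_sub_one_of_pos (show (0:ℝ) < 3 by norm_num)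
      linarith
    have h4 : Real.log 2 ≤ Real.log (2 + 2*(n:ℝ)*(b-a)) :=
      Real.log_le_log (by norm_num) (by nlinarith)
    have h5 : (0.6931471803 : ℝ) < Real.log 2 := Real.log_two_gt_d9
    linarith
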